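/- Let G be a connected graph on vertices v₁,…,vₙ such that the graph G_α (constructed with parameter α as: cliques V_i of size α, complete bipartite graphs between V_i and V_j for edges v_iv_j, pendant vertices u_{i,j} on each v_{i,j}, and vertices w_j adjacent to all u_{i,j}) is minimally 1-tough. Then G is α-critical and α(G) = α. -/

import Mathlib

open SimpleGraph

/-- Number of connected components after deleting vertex set `S`. -/
noncomputable def numComp {V : Type*} (G : SimpleGraph V) (S : Set V) : ℕ :=
  Nat.card (G.induce (Sᶜ : Set V)).ConnectedComponent

/-- `S` is a cutset: its removal leaves more than one component. -/
def IsCutset {V : Type*} (G : SimpleGraph V) (S : Set V) : Prop :=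
  1 < numComp G S

/-- `G` is `t`-tough: every cutset `S` leaves at most `|S|/t` components.
Equivalently `τ(G) ≥ t` (for `t > 0`). -/
def IsTTough {V : Type*} (t : ℚ) (G : SimpleGraph V) : Prop :=
  ∀ S : Set V, IsCutset G S → t * (numComp G S : ℚ) ≤ (Nat.card S : ℚ)

/-- `τ(G) = t`: `G` is `t`-tough and `t` is the largest such value. -/
def ToughnessEq {V : Type*} (G : SimpleGraph V) (t : ℚ) : Prop :=
  IsTTough t G ∧ ∀ t' : ℚ, IsTTough t' G → t' ≤ t

/-- The toughness of `G` equals `t`, characterized as the minimum of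
`|S|/ω(G−S)` over cutsets `S` (valid for connected noncomplete graphs). -/
def ToughnessMin {V : Type*} (G : SimpleGraph V) (t : ℚ) : Prop :=
  IsLeast {q : ℚ | ∃ S : Set V, IsCutset G S ∧
    q = (Nat.card S : ℚ) / (numComp G S : ℚ)} t

/-- `G` is minimally `t`-tough. -/
def MinTough {V : Type*} (t : ℚ) (G : SimpleGraph V) : Prop :=
  ToughnessEq G t ∧ ∀ e ∈ G.edgeSet, ¬ IsTTough t (G.deleteEdges {e})

/-- `G` is almost minimally 1-tough: `τ(G) ≥ 1` and `τ(G−e) < 1` for all edges. -/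
def AlmostMinOneTough {V : Type*} (G : SimpleGraph V) : Prop :=
  IsTTough 1 G ∧ ∀ e ∈ G.edgeSet, ¬ IsTTough 1 (G.deleteEdges {e})

/-- The independence number of `G`. -/
noncomputable def indepNum {V : Type*} [Fintype V] (G : SimpleGraph V) : ℕ :=
  sSup {n | ∃ s : Set V, s.Pairwise (fun x y => ¬ G.Adj x y) ∧ Nat.card s = n}

/-- `G` is α-critical: deleting any edge increases the independence number. -/
def AlphaCritical {V : Type*} [Fintype V] (G : SimpleGraph V) : Prop :=
  ∀ e ∈ G.edgeSet, _root_.indepNum G < _root_.indepNum (G.deleteEdges {e})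

/-- The construction `G_α`: each vertex `i` of `G` is replaced by a clique
`V_i = {i} × Fin α`; edges of `G` become complete bipartite graphs between the
corresponding cliques; each `v_{i,j}` gets a pendant neighbor `u_{i,j}`; and
each hub vertex `w_j` is adjacent to all `u_{i,j}`. -/
def Galpha {V : Type*} (G : SimpleGraph V) (α : ℕ) :
    SimpleGraph ((V × Fin α) ⊕ ((V × Fin α) ⊕ Fin α)) :=
  SimpleGraph.fromRel (fun x y =>
    match x, y with
    | Sum.inl p, Sum.inl q => p.1 = q.1 ∨ G.Adj p.1 q.1
    | Sum.inl p, Sum.inr (Sum.inl q) => p = q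
    | Sum.inr (Sum.inl p), Sum.inr (Sum.inr j) => p.2 = j
    | _, _ => False)

set_option linter.unusedSectionVars false

namespace Stmt12Aux

/-- Lower bound on number of components via a surjective "coloring" constant on edges. -/
lemma le_numComp {X β : Type*} [Finite X] (H : SimpleGraph X) (S : Set X)
    (f : ↥(Sᶜ : Set X) → β) (hc : ∀ a b, (H.induce (Sᶜ : Set X)).Adj a b → f a = f b)
    (hs : Function.Surjective f) : Nat.card β ≤ numComp H S := by
  classical
  have hwalk0 : ∀ (a b : ↥(Sᶜ : Set X)) (p : (H.induce (Sᶜ : Set X)).Walk a b),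
      f a = f b := by
    intro a b p
    induction p with
    | nil => rfl
    | cons h p ih => exact (hc _ _ h).trans ih
  let F := SimpleGraph.ConnectedComponent.lift f (fun a b p _ => hwalk0 a b p)
  have hFs : Function.Surjective F := by
    intro b
    obtain ⟨x, hx⟩ := hs b
    exact ⟨(H.induce (Sᶜ : Set X)).connectedComponentMk x, hx⟩
  exact Nat.card_le_card_of_surjective F hFs


variable {V : Type*} [Fintype V] {G : SimpleGraph V} {α : ℕ}

lemma galpha_adj_vv {p q : V × Fin α} :
    (Galpha G α).Adj (.inl p) (.inl q) ↔ p ≠ q ∧ (p.1 = q.1 ∨ G.Adj p.1 q.1) := by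
  simp only [Galpha, fromRel_adj, ne_eq, Sum.inl.injEq]
  constructor
  · rintro ⟨h1, h2 | h2⟩
    · exact ⟨h1, h2⟩
    · exact ⟨h1, h2.imp Eq.symm G.adj_symm⟩
  · rintro ⟨h1, h2⟩
    exact ⟨h1, Or.inl h2⟩

lemma galpha_adj_uv {p q : V × Fin α} :
    (Galpha G α).Adj (.inr (.inl p)) (.inl q) ↔ p = q := by
  simp only [Galpha, fromRel_adj, ne_eq]
  constructor
  · rintro ⟨h1, h2 | h2⟩
    · exact h2.elim
    · exact h2.symm
  · rintro rfl
    exact ⟨by simp, Or.inr rfl⟩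

lemma galpha_adj_uw {p : V × Fin α} {j : Fin α} :
    (Galpha G α).Adj (.inr (.inl p)) (.inr (.inr j)) ↔ p.2 = j := by
  simp only [Galpha, fromRel_adj, ne_eq]
  constructor
  · rintro ⟨h1, h2 | h2⟩
    · exact h2
    · exact h2.elim
  · rintro rfl
    exact ⟨by simp, Or.inl rfl⟩

lemma galpha_not_adj_vw {p : V × Fin α} {j : Fin α} :
    ¬ (Galpha G α).Adj (.inl p) (.inr (.inr j)) := by
  simp only [Galpha, fromRel_adj, ne_eq]
  rintro ⟨h1, h2 | h2⟩ <;> exact h2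

lemma galpha_not_adj_uu {p q : V × Fin α} :
    ¬ (Galpha G α).Adj (.inr (.inl p)) (.inr (.inl q)) := by
  simp only [Galpha, fromRel_adj, ne_eq]
  rintro ⟨h1, h2 | h2⟩ <;> exact h2

lemma galpha_not_adj_ww {i j : Fin α} :
    ¬ (Galpha G α).Adj (.inr (.inr i)) (.inr (.inr j)) := by
  simp only [Galpha, fromRel_adj, ne_eq]
  rintro ⟨h1, h2 | h2⟩ <;> exact h2

/-- Goal 1: any independent set of `G` has size at most `α`. -/
lemma card_indep_le (hα : 0 < α) (hT : IsTTough 1 (Galpha G α))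
    (I : Set V) (hI : I.Pairwise fun x y => ¬ G.Adj x y) : Nat.card I ≤ α := by
  classical
  by_contra hk
  push_neg at hk
  set SA : Set ((V × Fin α) ⊕ ((V × Fin α) ⊕ Fin α)) :=
    {x | match x with
      | Sum.inl p => p.1 ∉ I
      | Sum.inr (Sum.inl _) => False
      | Sum.inr (Sum.inr _) => True} with hSAdef
  have hmemv : ∀ p : V × Fin α, ((Sum.inl p : (V × Fin α) ⊕ ((V × Fin α) ⊕ Fin α)) ∈ SAᶜ) ↔ p.1 ∈ I := by
    intro p; simp [hSAdef, Set.mem_compl_iff, Set.mem_setOf_eq]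
  have hmemu : ∀ p : V × Fin α, ((Sum.inr (Sum.inl p) : (V × Fin α) ⊕ ((V × Fin α) ⊕ Fin α)) ∈ SAᶜ) := by
    intro p; simp [hSAdef, Set.mem_compl_iff, Set.mem_setOf_eq]
  have hmemw : ∀ j : Fin α, ((Sum.inr (Sum.inr j) : (V × Fin α) ⊕ ((V × Fin α) ⊕ Fin α)) ∉ SAᶜ) := by
    intro j; simp [hSAdef, Set.mem_compl_iff, Set.mem_setOf_eq]
  let β := (↥I ⊕ (↥(Iᶜ : Set V) × Fin α))
  let f : ↥(SAᶜ) → β := fun x =>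
    match x with
    | ⟨Sum.inl p, hx⟩ => Sum.inl ⟨p.1, (hmemv p).mp hx⟩
    | ⟨Sum.inr (Sum.inl p), _⟩ =>
        if h : p.1 ∈ I then Sum.inl ⟨p.1, h⟩ else Sum.inr (⟨p.1, h⟩, p.2)
    | ⟨Sum.inr (Sum.inr j), hx⟩ => absurd hx (hmemw j)
  have hconst : ∀ a b, ((Galpha G α).induce (SAᶜ : Set _)).Adj a b → f a = f b := by
    rintro ⟨x, hx⟩ ⟨y, hy⟩ hadj
    have h' : (Galpha G α).Adj x y := comap_adj.mp hadj
    rcases x with p | p | j <;> rcases y with q | q | j'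
    · -- v v
      obtain ⟨hne, heq | ha⟩ := galpha_adj_vv.mp h'
      · simp only [f]
        exact congrArg Sum.inl (Subtype.ext heq)
      · have hp : p.1 ∈ I := (hmemv p).mp hx
        have hq : q.1 ∈ I := (hmemv q).mp hy
        by_cases hpq : p.1 = q.1
        · simp only [f]; exact congrArg Sum.inl (Subtype.ext hpq)
        · exact absurd ha (hI hp hq hpq)
    · -- v u
      have hq : q = p := galpha_adj_uv.mp ((Galpha G α).adj_symm h')
      subst hq
      have hp : q.1 ∈ I := (hmemv q).mp hx
      simp only [f, dif_pos hp]
    · exact absurd h' galpha_not_adj_vw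
    · -- u v
      have hq : p = q := galpha_adj_uv.mp h'
      subst hq
      have hp : p.1 ∈ I := (hmemv p).mp hy
      simp only [f, dif_pos hp]
    · exact absurd h' galpha_not_adj_uu
    · exact absurd hy (hmemw j')
    · exact absurd hx (hmemw j)
    · exact absurd hx (hmemw j)
    · exact absurd hx (hmemw j)
  have hsurj : Function.Surjective f := by
    rintro (⟨i, hi⟩ | ⟨⟨i, hi⟩, j⟩)
    · refine ⟨⟨Sum.inl (i, ⟨0, hα⟩), (hmemv _).mpr hi⟩, ?_⟩
      simp only [f]
    · refine ⟨⟨Sum.inr (Sum.inl (i, j)), hmemu _⟩, ?_⟩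
      simp only [f, dif_neg hi]
  have hle1 : Nat.card β ≤ numComp (Galpha G α) SA :=
    le_numComp (Galpha G α) SA f hconst hsurj
  have hcardβ : Nat.card β = Nat.card I + Nat.card ↥(Iᶜ : Set V) * α := by
    simp [β, Nat.card_sum, Nat.card_prod, Nat.card_eq_fintype_card]
  have hcut : IsCutset (Galpha G α) SA := by
    unfold IsCutset
    omega
  have hT' := hT SA hcut
  rw [one_mul, Nat.cast_le] at hT'
  -- upper bound on |SA|
  have hSAle : Nat.card SA ≤ Nat.card ↥(Iᶜ : Set V) * α + α := by
    have : Nat.card SA ≤ Nat.card ((↥(Iᶜ : Set V) × Fin α) ⊕ Fin α) := by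
      refine Nat.card_le_card_of_injective (fun x =>
        match x with
        | ⟨Sum.inl p, hx⟩ => Sum.inl (⟨p.1, hx⟩, p.2)
        | ⟨Sum.inr (Sum.inl p), hx⟩ => absurd hx (by simp [hSAdef, Set.mem_setOf_eq])
        | ⟨Sum.inr (Sum.inr j), _⟩ => Sum.inr j) ?_
      rintro ⟨x, hx⟩ ⟨y, hy⟩ hfeq
      rcases x with p | p | j <;> rcases y with q | q | j'
      · simp only [Sum.inl.injEq, Prod.mk.injEq, Subtype.mk.injEq] at hfeq
        exact Subtype.ext (congrArg Sum.inl (Prod.ext hfeq.1 hfeq.2))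
      · exact absurd hy (by simp [hSAdef, Set.mem_setOf_eq])
      · simp at hfeq
      · exact absurd hx (by simp [hSAdef, Set.mem_setOf_eq])
      · exact absurd hx (by simp [hSAdef, Set.mem_setOf_eq])
      · exact absurd hx (by simp [hSAdef, Set.mem_setOf_eq])
      · simp at hfeq
      · exact absurd hy (by simp [hSAdef, Set.mem_setOf_eq])
      · simp only [Sum.inr.injEq] at hfeq
        exact Subtype.ext (by simp [hfeq])
    simpa [Nat.card_sum, Nat.card_prod, Nat.card_eq_fintype_card] using this
  omega



/-- Degenerate case `α = 0`: the vertex set of `Galpha` is empty, so no cutsets exist. -/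
lemma alpha_zero_contra (hmin : MinTough 1 (Galpha G 0)) : False := by
  have hT2 : IsTTough 2 (Galpha G 0) := by
    intro S hS
    exfalso
    have hempty : IsEmpty ((Galpha G 0).induce (Sᶜ : Set _)).ConnectedComponent := by
      constructor
      intro C
      obtain ⟨⟨x, _⟩, _⟩ := C.exists_rep
      rcases x with p | p | j
      · exact (Nat.not_lt_zero _ p.2.2).elim
      · exact (Nat.not_lt_zero _ p.2.2).elim
      · exact (Nat.not_lt_zero _ j.2).elim
    have : numComp (Galpha G 0) S = 0 := by
      unfold numComp
      exact Nat.card_eq_zero.mpr (Or.inl hempty)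
    unfold IsCutset at hS
    omega
  have := hmin.1.2 2 hT2
  linarith

/-- Degenerate case `|V| = 1`. -/
lemma subsingleton_contra (hsub : Subsingleton V) (hne : Nonempty V) (hα : 0 < α)
    (hT : IsTTough 1 (Galpha G α)) : False := by
  classical
  haveI : Unique V := ⟨⟨hne.some⟩, fun b => Subsingleton.elim _ _⟩
  set SB : Set ((V × Fin α) ⊕ ((V × Fin α) ⊕ Fin α)) :=
    {x | match x with
      | Sum.inr (Sum.inl _) => True
      | _ => False} with hSBdef
  have hmemv : ∀ p : V × Fin α, ((Sum.inl p : (V × Fin α) ⊕ ((V × Fin α) ⊕ Fin α)) ∈ SBᶜ) := by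
    intro p; simp [hSBdef, Set.mem_compl_iff, Set.mem_setOf_eq]
  have hmemw : ∀ j : Fin α, ((Sum.inr (Sum.inr j) : (V × Fin α) ⊕ ((V × Fin α) ⊕ Fin α)) ∈ SBᶜ) := by
    intro j; simp [hSBdef, Set.mem_compl_iff, Set.mem_setOf_eq]
  have hmemu : ∀ p : V × Fin α, ((Sum.inr (Sum.inl p) : (V × Fin α) ⊕ ((V × Fin α) ⊕ Fin α)) ∉ SBᶜ) := by
    intro p; simp [hSBdef, Set.mem_compl_iff, Set.mem_setOf_eq]
  let f : ↥(SBᶜ) → (Fin α ⊕ Unit) := fun x =>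
    match x with
    | ⟨Sum.inl _, _⟩ => Sum.inr ()
    | ⟨Sum.inr (Sum.inl p), hx⟩ => absurd hx (hmemu p)
    | ⟨Sum.inr (Sum.inr j), _⟩ => Sum.inl j
  have hconst : ∀ a b, ((Galpha G α).induce (SBᶜ : Set _)).Adj a b → f a = f b := by
    rintro ⟨x, hx⟩ ⟨y, hy⟩ hadj
    have h' : (Galpha G α).Adj x y := comap_adj.mp hadj
    rcases x with p | p | j <;> rcases y with q | q | j'
    · rfl
    · exact absurd hy (hmemu q)
    · exact absurd h' galpha_not_adj_vw
    · exact absurd hx (hmemu p)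
    · exact absurd hx (hmemu p)
    · exact absurd hx (hmemu p)
    · exact absurd ((Galpha G α).adj_symm h') galpha_not_adj_vw
    · exact absurd hy (hmemu q)
    · exact absurd h' galpha_not_adj_ww
  have hsurj : Function.Surjective f := by
    rintro (j | u)
    · exact ⟨⟨Sum.inr (Sum.inr j), hmemw j⟩, rfl⟩
    · exact ⟨⟨Sum.inl (hne.some, ⟨0, hα⟩), hmemv _⟩, rfl⟩
  have hle1 : Nat.card (Fin α ⊕ Unit) ≤ numComp (Galpha G α) SB :=
    le_numComp (Galpha G α) SB f hconst hsurj
  have hc1 : α + 1 ≤ numComp (Galpha G α) SB := by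
    simpa [Nat.card_sum, Nat.card_eq_fintype_card] using hle1
  have hcut : IsCutset (Galpha G α) SB := by
    unfold IsCutset; omega
  have hT' := hT SB hcut
  rw [one_mul, Nat.cast_le] at hT'
  have hSBle : Nat.card SB ≤ α := by
    have : Nat.card SB ≤ Nat.card (V × Fin α) := by
      refine Nat.card_le_card_of_injective (fun x =>
        match x with
        | ⟨Sum.inl p, hx⟩ => absurd hx (by simp [hSBdef, Set.mem_setOf_eq])
        | ⟨Sum.inr (Sum.inl p), _⟩ => p
        | ⟨Sum.inr (Sum.inr j), hx⟩ => absurd hx (by simp [hSBdef, Set.mem_setOf_eq])) ?_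
      rintro ⟨x, hx⟩ ⟨y, hy⟩ hfeq
      rcases x with p | p | j <;> rcases y with q | q | j'
      · exact absurd hx (by simp [hSBdef, Set.mem_setOf_eq])
      · exact absurd hx (by simp [hSBdef, Set.mem_setOf_eq])
      · exact absurd hx (by simp [hSBdef, Set.mem_setOf_eq])
      · exact absurd hy (by simp [hSBdef, Set.mem_setOf_eq])
      · have hpq : p = q := hfeq
        exact Subtype.ext (by rw [hpq])
      · exact absurd hy (by simp [hSBdef, Set.mem_setOf_eq])
      · exact absurd hx (by simp [hSBdef, Set.mem_setOf_eq])
      · exact absurd hx (by simp [hSBdef, Set.mem_setOf_eq])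
      · exact absurd hx (by simp [hSBdef, Set.mem_setOf_eq])
    calc Nat.card SB ≤ Nat.card (V × Fin α) := this
      _ = 1 * α := by simp [Nat.card_prod, Nat.card_eq_fintype_card, Nat.card_unique]
      _ = α := one_mul α
  omega

lemma indep_bddAbove :
    BddAbove {n | ∃ s : Set V, s.Pairwise (fun x y => ¬ G.Adj x y) ∧ Nat.card s = n} := by
  refine ⟨Fintype.card V, ?_⟩
  rintro n ⟨s, _, rfl⟩
  have := Nat.card_le_card_of_injective (Subtype.val : s → V) Subtype.val_injective
  simpa [Nat.card_eq_fintype_card] using this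

lemma le_indepNum {s : Set V} (hs : s.Pairwise (fun x y => ¬ G.Adj x y)) :
    Nat.card s ≤ _root_.indepNum G :=
  le_csSup indep_bddAbove ⟨s, hs, rfl⟩

lemma indepNum_le {m : ℕ} (h : ∀ s : Set V, s.Pairwise (fun x y => ¬ G.Adj x y) → Nat.card s ≤ m) :
    _root_.indepNum G ≤ m := by
  refine csSup_le ⟨0, ∅, by simp, by simp⟩ ?_
  rintro n ⟨s, hs, rfl⟩
  exact h s hs


section Core

variable {V : Type*} [Fintype V]

/-- `Galpha` minus one `v`–`v` edge (given by endpoints `p₀ q₀`). -/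
def Hgr (G : SimpleGraph V) (α : ℕ) (p₀ q₀ : V × Fin α) :
    SimpleGraph ((V × Fin α) ⊕ ((V × Fin α) ⊕ Fin α)) :=
  (Galpha G α).deleteEdges {s(Sum.inl p₀, Sum.inl q₀)}

variable {G : SimpleGraph V} {α : ℕ} {p₀ q₀ : V × Fin α}

lemma hgr_adj_uv {p q : V × Fin α} :
    (Hgr G α p₀ q₀).Adj (.inr (.inl p)) (.inl q) ↔ p = q := by
  rw [Hgr, deleteEdges_adj]
  constructor
  · exact fun h => galpha_adj_uv.mp h.1
  · intro h
    refine ⟨galpha_adj_uv.mpr h, ?_⟩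
    simp [Sym2.eq_iff]

lemma hgr_adj_uw {p : V × Fin α} {j : Fin α} :
    (Hgr G α p₀ q₀).Adj (.inr (.inl p)) (.inr (.inr j)) ↔ p.2 = j := by
  rw [Hgr, deleteEdges_adj]
  constructor
  · exact fun h => galpha_adj_uw.mp h.1
  · intro h
    refine ⟨galpha_adj_uw.mpr h, ?_⟩
    simp [Sym2.eq_iff]

lemma hgr_not_adj_uu {p q : V × Fin α} :
    ¬ (Hgr G α p₀ q₀).Adj (.inr (.inl p)) (.inr (.inl q)) := by
  rw [Hgr, deleteEdges_adj]
  exact fun h => galpha_not_adj_uu h.1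

lemma hgr_not_adj_ww {i j : Fin α} :
    ¬ (Hgr G α p₀ q₀).Adj (.inr (.inr i)) (.inr (.inr j)) := by
  rw [Hgr, deleteEdges_adj]
  exact fun h => galpha_not_adj_ww h.1

lemma hgr_not_adj_vw {p : V × Fin α} {j : Fin α} :
    ¬ (Hgr G α p₀ q₀).Adj (.inl p) (.inr (.inr j)) := by
  rw [Hgr, deleteEdges_adj]
  exact fun h => galpha_not_adj_vw h.1

lemma hgr_adj_vv_of {p q : V × Fin α} (h1 : p ≠ q) (h2 : p.1 = q.1 ∨ G.Adj p.1 q.1)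
    (h3 : ¬ (p = p₀ ∧ q = q₀ ∨ p = q₀ ∧ q = p₀)) :
    (Hgr G α p₀ q₀).Adj (.inl p) (.inl q) := by
  rw [Hgr, deleteEdges_adj]
  refine ⟨galpha_adj_vv.mpr ⟨h1, h2⟩, ?_⟩
  simpa [Sym2.eq_iff] using h3

lemma hgr_adj_vv_mp {p q : V × Fin α} (h : (Hgr G α p₀ q₀).Adj (.inl p) (.inl q)) :
    p ≠ q ∧ (p.1 = q.1 ∨ G.Adj p.1 q.1) := by
  rw [Hgr, deleteEdges_adj] at h
  exact galpha_adj_vv.mp h.1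

variable (G α p₀ q₀) in
/-- The connected component of a surviving vertex. -/
noncomputable def cmk (S : Set ((V × Fin α) ⊕ ((V × Fin α) ⊕ Fin α)))
    (x : (V × Fin α) ⊕ ((V × Fin α) ⊕ Fin α)) (hx : x ∈ (Sᶜ : Set _)) :
    ((Hgr G α p₀ q₀).induce (Sᶜ : Set _)).ConnectedComponent :=
  ((Hgr G α p₀ q₀).induce (Sᶜ : Set _)).connectedComponentMk ⟨x, hx⟩

variable (G α p₀ q₀) in
def HasV (S : Set ((V × Fin α) ⊕ ((V × Fin α) ⊕ Fin α)))
    (C : ((Hgr G α p₀ q₀).induce (Sᶜ : Set _)).ConnectedComponent) : Prop :=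
  ∃ p : V × Fin α, ∃ h : (Sum.inl p : (V × Fin α) ⊕ ((V × Fin α) ⊕ Fin α)) ∈ (Sᶜ : Set _),
    cmk G α p₀ q₀ S (Sum.inl p) h = C

variable (G α p₀ q₀) in
def HasW (S : Set ((V × Fin α) ⊕ ((V × Fin α) ⊕ Fin α)))
    (C : ((Hgr G α p₀ q₀).induce (Sᶜ : Set _)).ConnectedComponent) : Prop :=
  ∃ j : Fin α, ∃ h : (Sum.inr (Sum.inr j) : (V × Fin α) ⊕ ((V × Fin α) ⊕ Fin α)) ∈ (Sᶜ : Set _),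
    cmk G α p₀ q₀ S (Sum.inr (Sum.inr j)) h = C

variable (G α p₀ q₀) in
def HasU (S : Set ((V × Fin α) ⊕ ((V × Fin α) ⊕ Fin α)))
    (C : ((Hgr G α p₀ q₀).induce (Sᶜ : Set _)).ConnectedComponent) : Prop :=
  ∃ p : V × Fin α, ∃ h : (Sum.inr (Sum.inl p) : (V × Fin α) ⊕ ((V × Fin α) ⊕ Fin α)) ∈ (Sᶜ : Set _),
    cmk G α p₀ q₀ S (Sum.inr (Sum.inl p)) h = C

def Lones (S : Set ((V × Fin α) ⊕ ((V × Fin α) ⊕ Fin α))) : Set (V × Fin α) :=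
  {p | (Sum.inr (Sum.inl p) : (V × Fin α) ⊕ ((V × Fin α) ⊕ Fin α)) ∈ (Sᶜ : Set _) ∧
    (Sum.inl p : (V × Fin α) ⊕ ((V × Fin α) ⊕ Fin α)) ∈ S ∧
    (Sum.inr (Sum.inr p.2) : (V × Fin α) ⊕ ((V × Fin α) ⊕ Fin α)) ∈ S}

def BlockedCols (S : Set ((V × Fin α) ⊕ ((V × Fin α) ⊕ Fin α))) : Set (Fin α) :=
  {j | (Sum.inr (Sum.inr j) : (V × Fin α) ⊕ ((V × Fin α) ⊕ Fin α)) ∈ (Sᶜ : Set _) ∧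
    ∀ i : V, (Sum.inr (Sum.inl (i, j)) : (V × Fin α) ⊕ ((V × Fin α) ⊕ Fin α)) ∈ S ∨
      (Sum.inl (i, j) : (V × Fin α) ⊕ ((V × Fin α) ⊕ Fin α)) ∈ S}

variable {S : Set ((V × Fin α) ⊕ ((V × Fin α) ⊕ Fin α))}

lemma cmk_eq_of_adj {x y : (V × Fin α) ⊕ ((V × Fin α) ⊕ Fin α)}
    (hx : x ∈ (Sᶜ : Set _)) (hy : y ∈ (Sᶜ : Set _)) (h : (Hgr G α p₀ q₀).Adj x y) :
    cmk G α p₀ q₀ S x hx = cmk G α p₀ q₀ S y hy :=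
  ConnectedComponent.eq.mpr (Adj.reachable (comap_adj.mpr h))

lemma tri (C : ((Hgr G α p₀ q₀).induce (Sᶜ : Set _)).ConnectedComponent) :
    HasV G α p₀ q₀ S C ∨ HasW G α p₀ q₀ S C ∨ HasU G α p₀ q₀ S C := by
  obtain ⟨⟨x, hx⟩, hC⟩ := C.exists_rep
  rcases x with p | p | j
  · exact Or.inl ⟨p, hx, hC⟩
  · exact Or.inr (Or.inr ⟨p, hx, hC⟩)
  · exact Or.inr (Or.inl ⟨j, hx, hC⟩)

lemma w_blocked {C : ((Hgr G α p₀ q₀).induce (Sᶜ : Set _)).ConnectedComponent}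
    {j : Fin α} (hj : (Sum.inr (Sum.inr j) : (V × Fin α) ⊕ ((V × Fin α) ⊕ Fin α)) ∈ (Sᶜ : Set _))
    (hC : cmk G α p₀ q₀ S (Sum.inr (Sum.inr j)) hj = C)
    (hnv : ¬ HasV G α p₀ q₀ S C) : j ∈ BlockedCols S := by
  refine ⟨hj, fun i => ?_⟩
  by_contra hcon
  push_neg at hcon
  obtain ⟨hu, hv⟩ := hcon
  rw [← Set.mem_compl_iff] at hu hv
  have h1 : cmk G α p₀ q₀ S (Sum.inr (Sum.inl (i, j))) hu = cmk G α p₀ q₀ S (Sum.inr (Sum.inr j)) hj :=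
    cmk_eq_of_adj hu hj (hgr_adj_uw.mpr rfl)
  have h2 : cmk G α p₀ q₀ S (Sum.inl (i, j)) hv = cmk G α p₀ q₀ S (Sum.inr (Sum.inl (i, j))) hu :=
    cmk_eq_of_adj hv hu ((Hgr G α p₀ q₀).adj_symm (hgr_adj_uv.mpr rfl))
  exact hnv ⟨(i, j), hv, by rw [h2, h1, hC]⟩

lemma u_lone {C : ((Hgr G α p₀ q₀).induce (Sᶜ : Set _)).ConnectedComponent}
    {p : V × Fin α} (hp : (Sum.inr (Sum.inl p) : (V × Fin α) ⊕ ((V × Fin α) ⊕ Fin α)) ∈ (Sᶜ : Set _))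
    (hC : cmk G α p₀ q₀ S (Sum.inr (Sum.inl p)) hp = C)
    (hnv : ¬ HasV G α p₀ q₀ S C) (hnw : ¬ HasW G α p₀ q₀ S C) : p ∈ Lones S := by
  refine ⟨hp, ?_, ?_⟩
  · by_contra hv
    rw [← Set.mem_compl_iff] at hv
    have h2 : cmk G α p₀ q₀ S (Sum.inl p) hv = cmk G α p₀ q₀ S (Sum.inr (Sum.inl p)) hp :=
      cmk_eq_of_adj hv hp ((Hgr G α p₀ q₀).adj_symm (hgr_adj_uv.mpr rfl))
    exact hnv ⟨p, hv, by rw [h2, hC]⟩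
  · by_contra hw
    rw [← Set.mem_compl_iff] at hw
    have h2 : cmk G α p₀ q₀ S (Sum.inr (Sum.inr p.2)) hw = cmk G α p₀ q₀ S (Sum.inr (Sum.inl p)) hp :=
      cmk_eq_of_adj hw hp ((Hgr G α p₀ q₀).adj_symm (hgr_adj_uw.mpr rfl))
    exact hnw ⟨p.2, hw, by rw [h2, hC]⟩

end Core


section Core2

variable {V : Type*} [Fintype V] {G : SimpleGraph V} {α : ℕ} {p₀ q₀ : V × Fin α}
variable {S : Set ((V × Fin α) ⊕ ((V × Fin α) ⊕ Fin α))}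

/-- First counting injection: every component is a v-component, a lone u, or a blocked column. -/
lemma card_comp_le :
    Nat.card ((Hgr G α p₀ q₀).induce (Sᶜ : Set _)).ConnectedComponent ≤
      Nat.card {C : ((Hgr G α p₀ q₀).induce (Sᶜ : Set _)).ConnectedComponent // HasV G α p₀ q₀ S C}
        + (Nat.card (Lones S) + Nat.card (BlockedCols S)) := by
  classical
  have key : Nat.card ((Hgr G α p₀ q₀).induce (Sᶜ : Set _)).ConnectedComponent ≤
      Nat.card ({C : ((Hgr G α p₀ q₀).induce (Sᶜ : Set _)).ConnectedComponent // HasV G α p₀ q₀ S C}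
        ⊕ (↥(Lones S) ⊕ ↥(BlockedCols S))) := by
    refine Nat.card_le_card_of_injective (fun C =>
      if h : HasV G α p₀ q₀ S C then Sum.inl ⟨C, h⟩
      else if h2 : HasW G α p₀ q₀ S C then
        Sum.inr (Sum.inr ⟨h2.choose, w_blocked h2.choose_spec.choose h2.choose_spec.choose_spec h⟩)
      else
        Sum.inr (Sum.inl ⟨((tri C).resolve_left h |>.resolve_left h2).choose,
          u_lone ((tri C).resolve_left h |>.resolve_left h2).choose_spec.choose
            ((tri C).resolve_left h |>.resolve_left h2).choose_spec.choose_spec h h2⟩)) ?_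
    intro C C' heq
    dsimp only at heq
    by_cases h : HasV G α p₀ q₀ S C <;> by_cases h' : HasV G α p₀ q₀ S C'
    · rw [dif_pos h, dif_pos h'] at heq
      simpa using heq
    · rw [dif_pos h, dif_neg h'] at heq
      by_cases h2' : HasW G α p₀ q₀ S C'
      · rw [dif_pos h2'] at heq; exact absurd heq (by simp)
      · rw [dif_neg h2'] at heq; exact absurd heq (by simp)
    · rw [dif_neg h, dif_pos h'] at heq
      by_cases h2 : HasW G α p₀ q₀ S C
      · rw [dif_pos h2] at heq; exact absurd heq (by simp)
      · rw [dif_neg h2] at heq; exact absurd heq (by simp)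
    · rw [dif_neg h, dif_neg h'] at heq
      by_cases h2 : HasW G α p₀ q₀ S C <;> by_cases h2' : HasW G α p₀ q₀ S C'
      · rw [dif_pos h2, dif_pos h2'] at heq
        simp only [Sum.inr.injEq, Subtype.mk.injEq] at heq
        rw [← h2.choose_spec.choose_spec, ← h2'.choose_spec.choose_spec]
        congr 1
        rw [heq]
      · rw [dif_pos h2, dif_neg h2'] at heq; exact absurd heq (by simp)
      · rw [dif_neg h2, dif_pos h2'] at heq; exact absurd heq (by simp)
      · rw [dif_neg h2, dif_neg h2'] at heq
        simp only [Sum.inr.injEq, Sum.inl.injEq, Subtype.mk.injEq] at heq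
        rw [← ((tri C).resolve_left h |>.resolve_left h2).choose_spec.choose_spec,
          ← ((tri C').resolve_left h' |>.resolve_left h2').choose_spec.choose_spec]
        congr 1
        rw [heq]
  simpa [Nat.card_sum] using key

/-- Extract row/column data from a vertex. -/
def rcOf : ((V × Fin α) ⊕ ((V × Fin α) ⊕ Fin α)) → Option (V × Fin α)
  | Sum.inl p => some p
  | Sum.inr (Sum.inl p) => some p
  | Sum.inr (Sum.inr _) => none

def colOf : ((V × Fin α) ⊕ ((V × Fin α) ⊕ Fin α)) → Fin α
  | Sum.inl p => p.2
  | Sum.inr (Sum.inl p) => p.2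
  | Sum.inr (Sum.inr j) => j

/-- Choose a deleted cell (u or v) in column `j`, row `i`. -/
noncomputable def cell (S : Set ((V × Fin α) ⊕ ((V × Fin α) ⊕ Fin α))) (j : Fin α) (i : V)
    (h : (Sum.inr (Sum.inl (i, j)) : (V × Fin α) ⊕ ((V × Fin α) ⊕ Fin α)) ∈ S ∨
      (Sum.inl (i, j) : (V × Fin α) ⊕ ((V × Fin α) ⊕ Fin α)) ∈ S) : ↥S := by
  classical
  exact if hu : (Sum.inr (Sum.inl (i, j)) : (V × Fin α) ⊕ ((V × Fin α) ⊕ Fin α)) ∈ S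
    then ⟨_, hu⟩ else ⟨Sum.inl (i, j), h.resolve_left hu⟩

lemma rc_cell {j : Fin α} {i : V} {h} : rcOf (cell S j i h).1 = some (i, j) := by
  rw [cell]
  split_ifs <;> rfl

lemma col_cell {j : Fin α} {i : V} {h} : colOf (cell S j i h).1 = j := by
  rw [cell]
  split_ifs <;> rfl

/-- Second counting injection (assuming no fully-alive column): `α + L + W ≤ |S|`. -/
lemma card_S_ge (hnt : Nontrivial V)
    (hnF0 : ∀ j : Fin α,
      (Sum.inr (Sum.inr j) : (V × Fin α) ⊕ ((V × Fin α) ⊕ Fin α)) ∉ S →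
      ∃ i : V, (Sum.inr (Sum.inl (i, j)) : (V × Fin α) ⊕ ((V × Fin α) ⊕ Fin α)) ∈ S ∨
        (Sum.inl (i, j) : (V × Fin α) ⊕ ((V × Fin α) ⊕ Fin α)) ∈ S) :
    α + (Nat.card (Lones S) + Nat.card (BlockedCols S)) ≤ Nat.card S := by
  classical
  have key : Nat.card (Fin α ⊕ (↥(Lones S) ⊕ ↥(BlockedCols S))) ≤ Nat.card S := by
    refine Nat.card_le_card_of_injective (fun z =>
      match z with
      | Sum.inl j =>
        if hw : (Sum.inr (Sum.inr j) : (V × Fin α) ⊕ ((V × Fin α) ⊕ Fin α)) ∈ S then ⟨_, hw⟩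
        else cell S j (hnF0 j hw).choose (hnF0 j hw).choose_spec
      | Sum.inr (Sum.inl ⟨p, hp⟩) => ⟨Sum.inl p, hp.2.1⟩
      | Sum.inr (Sum.inr ⟨j, hj⟩) =>
        cell S j (Exists.choose (exists_ne ((hnF0 j hj.1).choose))) (hj.2 _)) ?_
    rintro (j | ⟨p, hp⟩ | ⟨j, hj⟩) (j' | ⟨p', hp'⟩ | ⟨j', hj'⟩) heq <;> dsimp only at heq
    -- (col, col)
    · by_cases hw : (Sum.inr (Sum.inr j) : (V × Fin α) ⊕ ((V × Fin α) ⊕ Fin α)) ∈ S <;>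
        by_cases hw' : (Sum.inr (Sum.inr j') : (V × Fin α) ⊕ ((V × Fin α) ⊕ Fin α)) ∈ S
      · rw [dif_pos hw, dif_pos hw'] at heq
        simpa using heq
      · rw [dif_pos hw, dif_neg hw'] at heq
        exfalso
        have h1 := congrArg rcOf (congrArg Subtype.val heq)
        rw [rc_cell] at h1
        simp [rcOf] at h1
      · rw [dif_neg hw, dif_pos hw'] at heq
        exfalso
        have h1 := congrArg rcOf (congrArg Subtype.val heq)
        rw [rc_cell] at h1
        simp [rcOf] at h1
      · rw [dif_neg hw, dif_neg hw'] at heq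
        have hcol := congrArg colOf (congrArg Subtype.val heq)
        rw [col_cell, col_cell] at hcol
        simp [hcol]
    -- (col, lone)
    · exfalso
      by_cases hw : (Sum.inr (Sum.inr j) : (V × Fin α) ⊕ ((V × Fin α) ⊕ Fin α)) ∈ S
      · rw [dif_pos hw] at heq
        exact absurd (congrArg Subtype.val heq) (by simp)
      · rw [dif_neg hw] at heq
        have hcol := congrArg colOf (congrArg Subtype.val heq)
        rw [col_cell] at hcol
        simp only [colOf] at hcol
        exact hw (by rw [hcol]; exact hp'.2.2)
    -- (col, blocked)
    · by_cases hw : (Sum.inr (Sum.inr j) : (V × Fin α) ⊕ ((V × Fin α) ⊕ Fin α)) ∈ S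
      · rw [dif_pos hw] at heq
        exfalso
        have h1 := congrArg rcOf (congrArg Subtype.val heq)
        rw [rc_cell] at h1
        simp [rcOf] at h1
      · rw [dif_neg hw] at heq
        exfalso
        have hcol := congrArg colOf (congrArg Subtype.val heq)
        rw [col_cell, col_cell] at hcol
        subst hcol
        have hrc := congrArg rcOf (congrArg Subtype.val heq)
        rw [rc_cell, rc_cell] at hrc
        simp only [Option.some.injEq, Prod.mk.injEq] at hrc
        have hpr : (hnF0 j hw).choose = (hnF0 j hj'.1).choose := rfl
        exact (exists_ne ((hnF0 j hj'.1).choose)).choose_spec (by rw [← hrc.1, hpr])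
    -- (lone, col)
    · exfalso
      by_cases hw : (Sum.inr (Sum.inr j') : (V × Fin α) ⊕ ((V × Fin α) ⊕ Fin α)) ∈ S
      · rw [dif_pos hw] at heq
        exact absurd (congrArg Subtype.val heq) (by simp)
      · rw [dif_neg hw] at heq
        have hcol := congrArg colOf (congrArg Subtype.val heq)
        rw [col_cell] at hcol
        simp only [colOf] at hcol
        exact hw (by rw [← hcol]; exact hp.2.2)
    -- (lone, lone)
    · have : Sum.inl p = Sum.inl p' := congrArg Subtype.val heq
      simp only [Sum.inl.injEq] at this
      simp [this]
    -- (lone, blocked)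
    · exfalso
      have hcol := congrArg colOf (congrArg Subtype.val heq)
      rw [col_cell] at hcol
      simp only [colOf] at hcol
      exact (hcol ▸ hj'.1) hp.2.2
    -- (blocked, col)
    · by_cases hw : (Sum.inr (Sum.inr j') : (V × Fin α) ⊕ ((V × Fin α) ⊕ Fin α)) ∈ S
      · rw [dif_pos hw] at heq
        exfalso
        have h1 := congrArg rcOf (congrArg Subtype.val heq)
        rw [rc_cell] at h1
        simp [rcOf] at h1
      · rw [dif_neg hw] at heq
        exfalso
        have hcol := congrArg colOf (congrArg Subtype.val heq)
        rw [col_cell, col_cell] at hcol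
        subst hcol
        have hrc := congrArg rcOf (congrArg Subtype.val heq)
        rw [rc_cell, rc_cell] at hrc
        simp only [Option.some.injEq, Prod.mk.injEq] at hrc
        have hpr : (hnF0 j hw).choose = (hnF0 j hj.1).choose := rfl
        exact (exists_ne ((hnF0 j hj.1).choose)).choose_spec (by rw [hrc.1, hpr])
    -- (blocked, lone)
    · exfalso
      have hcol := congrArg colOf (congrArg Subtype.val heq)
      rw [col_cell] at hcol
      simp only [colOf] at hcol
      exact (hcol ▸ hj.1) hp'.2.2
    -- (blocked, blocked)
    · have hcol := congrArg colOf (congrArg Subtype.val heq)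
      rw [col_cell, col_cell] at hcol
      simp [hcol]
  calc α + (Nat.card (Lones S) + Nat.card (BlockedCols S))
      = Nat.card (Fin α ⊕ (↥(Lones S) ⊕ ↥(BlockedCols S))) := by
        simp [Nat.card_sum, Nat.card_eq_fintype_card]
    _ ≤ Nat.card S := key

end Core2


section Core3

variable {V : Type*} [Fintype V] {G : SimpleGraph V} {α : ℕ} {p₀ q₀ : V × Fin α}
variable {S : Set ((V × Fin α) ⊕ ((V × Fin α) ⊕ Fin α))}

lemma exists_adj (hconn : G.Connected) (hnt : Nontrivial V) (i : V) : ∃ b, G.Adj i b := by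
  obtain ⟨b, hb⟩ := exists_ne i
  obtain ⟨w⟩ := hconn.preconnected i b
  cases w with
  | nil => exact absurd rfl hb
  | cons h _ => exact ⟨_, h⟩

/-- If some column is fully alive, then all v-components coincide. -/
lemma vcomp_unique (hconn : G.Connected) (hnt : Nontrivial V)
    (j₀ : Fin α)
    (hw : (Sum.inr (Sum.inr j₀) : (V × Fin α) ⊕ ((V × Fin α) ⊕ Fin α)) ∈ (Sᶜ : Set _))
    (hall : ∀ i : V, (Sum.inr (Sum.inl (i, j₀)) : (V × Fin α) ⊕ ((V × Fin α) ⊕ Fin α)) ∈ (Sᶜ : Set _) ∧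
      (Sum.inl (i, j₀) : (V × Fin α) ⊕ ((V × Fin α) ⊕ Fin α)) ∈ (Sᶜ : Set _))
    (C C' : ((Hgr G α p₀ q₀).induce (Sᶜ : Set _)).ConnectedComponent)
    (hC : HasV G α p₀ q₀ S C) (hC' : HasV G α p₀ q₀ S C') : C = C' := by
  have star : ∀ i : V, cmk G α p₀ q₀ S (Sum.inl (i, j₀)) (hall i).2 =
      cmk G α p₀ q₀ S (Sum.inr (Sum.inr j₀)) hw := by
    intro i
    have h1 : cmk G α p₀ q₀ S (Sum.inl (i, j₀)) (hall i).2 =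
        cmk G α p₀ q₀ S (Sum.inr (Sum.inl (i, j₀))) (hall i).1 :=
      cmk_eq_of_adj _ _ ((Hgr G α p₀ q₀).adj_symm (hgr_adj_uv.mpr rfl))
    have h2 : cmk G α p₀ q₀ S (Sum.inr (Sum.inl (i, j₀))) (hall i).1 =
        cmk G α p₀ q₀ S (Sum.inr (Sum.inr j₀)) hw :=
      cmk_eq_of_adj _ _ (hgr_adj_uw.mpr rfl)
    exact h1.trans h2
  have reach_any : ∀ (p : V × Fin α) (hp : (Sum.inl p : (V × Fin α) ⊕ ((V × Fin α) ⊕ Fin α)) ∈ (Sᶜ : Set _)),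
      cmk G α p₀ q₀ S (Sum.inl p) hp = cmk G α p₀ q₀ S (Sum.inr (Sum.inr j₀)) hw := by
    rintro ⟨i, j⟩ hp
    by_cases hpj : j = j₀
    · subst hpj
      exact star i
    · by_cases hdel : ((i, j) = p₀ ∧ (i, j₀) = q₀) ∨ ((i, j) = q₀ ∧ (i, j₀) = p₀)
      · -- corner case: the deleted edge is within row i; use a `G`-neighbor of `i`.
        have hrow : p₀.1 = q₀.1 := by
          rcases hdel with ⟨h1, h2⟩ | ⟨h1, h2⟩
          · rw [← h1, ← h2]
          · rw [← h1, ← h2]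
        obtain ⟨b, hb⟩ := exists_adj hconn hnt i
        have h1 : cmk G α p₀ q₀ S (Sum.inl (i, j)) hp =
            cmk G α p₀ q₀ S (Sum.inl (b, j₀)) (hall b).2 := by
          refine cmk_eq_of_adj _ _ (hgr_adj_vv_of ?_ (Or.inr hb) ?_)
          · intro hcon
            exact hb.ne (congrArg Prod.fst hcon)
          · rintro (⟨he1, he2⟩ | ⟨he1, he2⟩)
            · apply hb.ne
              have : p₀.1 = i := by rw [← he1]
              have h2 : q₀.1 = b := by rw [← he2]
              rw [this, h2] at hrow
              exact hrow
            · apply hb.ne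
              have : q₀.1 = i := by rw [← he1]
              have h2 : p₀.1 = b := by rw [← he2]
              rw [this, h2] at hrow
              exact hrow.symm
        exact h1.trans (star b)
      · have h1 : cmk G α p₀ q₀ S (Sum.inl (i, j)) hp =
            cmk G α p₀ q₀ S (Sum.inl (i, j₀)) (hall i).2 := by
          refine cmk_eq_of_adj _ _ (hgr_adj_vv_of ?_ (Or.inl rfl) hdel)
          intro hcon
          exact hpj (congrArg Prod.snd hcon)
        exact h1.trans (star i)
  obtain ⟨p, hp, hCp⟩ := hC
  obtain ⟨p', hp', hCp'⟩ := hC'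
  rw [← hCp, ← hCp', reach_any p hp, reach_any p' hp']

lemma card_S_ge_blocked {j₁ : Fin α} (hj₁ : j₁ ∈ BlockedCols S) {x₀ y₀ : V} (hxy : x₀ ≠ y₀) :
    (Nat.card (Lones S) + Nat.card (BlockedCols S)) + 1 ≤ Nat.card S := by
  classical
  have key : Nat.card ((↥(Lones S) ⊕ ↥(BlockedCols S)) ⊕ Unit) ≤ Nat.card S := by
    refine Nat.card_le_card_of_injective (fun z =>
      match z with
      | Sum.inl (Sum.inl ⟨p, hp⟩) => ⟨Sum.inl p, hp.2.1⟩
      | Sum.inl (Sum.inr ⟨j, hj⟩) => cell S j x₀ (hj.2 x₀)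
      | Sum.inr _ => cell S j₁ y₀ (hj₁.2 y₀)) ?_
    rintro ((⟨p, hp⟩ | ⟨j, hj⟩) | u) ((⟨p', hp'⟩ | ⟨j', hj'⟩) | u') heq <;> dsimp only at heq
    · have : Sum.inl p = Sum.inl p' := congrArg Subtype.val heq
      simp only [Sum.inl.injEq] at this
      simp [this]
    · exfalso
      have hcol := congrArg colOf (congrArg Subtype.val heq)
      rw [col_cell] at hcol
      simp only [colOf] at hcol
      exact (hcol ▸ hj'.1) hp.2.2
    · exfalso
      have hcol := congrArg colOf (congrArg Subtype.val heq)
      rw [col_cell] at hcol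
      simp only [colOf] at hcol
      exact (hcol ▸ hj₁.1) hp.2.2
    · exfalso
      have hcol := congrArg colOf (congrArg Subtype.val heq)
      rw [col_cell] at hcol
      simp only [colOf] at hcol
      exact (hcol ▸ hj.1) hp'.2.2
    · have hcol := congrArg colOf (congrArg Subtype.val heq)
      rw [col_cell, col_cell] at hcol
      simp [hcol]
    · exfalso
      have hrc := congrArg rcOf (congrArg Subtype.val heq)
      rw [rc_cell, rc_cell] at hrc
      simp only [Option.some.injEq, Prod.mk.injEq] at hrc
      exact hxy hrc.1
    · exfalso
      have hcol := congrArg colOf (congrArg Subtype.val heq)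
      rw [col_cell] at hcol
      simp only [colOf] at hcol
      exact (hcol ▸ hj₁.1) hp'.2.2
    · exfalso
      have hrc := congrArg rcOf (congrArg Subtype.val heq)
      rw [rc_cell, rc_cell] at hrc
      simp only [Option.some.injEq, Prod.mk.injEq] at hrc
      exact hxy hrc.1.symm
    · simp
  calc (Nat.card (Lones S) + Nat.card (BlockedCols S)) + 1
      = Nat.card ((↥(Lones S) ⊕ ↥(BlockedCols S)) ⊕ Unit) := by
        simp [Nat.card_sum]
    _ ≤ Nat.card S := key

lemma card_S_ge_lone {p₁ : V × Fin α} (hp₁ : p₁ ∈ Lones S) :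
    Nat.card (Lones S) + 1 ≤ Nat.card S := by
  classical
  have key : Nat.card (↥(Lones S) ⊕ Unit) ≤ Nat.card S := by
    refine Nat.card_le_card_of_injective (fun z =>
      match z with
      | Sum.inl (⟨p, hp⟩ : ↥(Lones S)) => ⟨Sum.inl p, hp.2.1⟩
      | Sum.inr _ => ⟨Sum.inr (Sum.inr p₁.2), hp₁.2.2⟩) ?_
    rintro (⟨p, hp⟩ | u) (⟨p', hp'⟩ | u') heq <;> dsimp only at heq
    · have : Sum.inl p = Sum.inl p' := congrArg Subtype.val heq
      simp only [Sum.inl.injEq] at this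
      simp [this]
    · exact absurd (congrArg Subtype.val heq) (by simp)
    · exact absurd (congrArg Subtype.val heq) (by simp)
    · simp
  calc Nat.card (Lones S) + 1 = Nat.card (↥(Lones S) ⊕ Unit) := by simp [Nat.card_sum]
    _ ≤ Nat.card S := key

/-- The core counting lemma: a "bad" cutset forces at least `α + 1` v-components. -/
lemma core (hnt : Nontrivial V) (hconn : G.Connected)
    (hcut : 1 < Nat.card ((Hgr G α p₀ q₀).induce (Sᶜ : Set _)).ConnectedComponent)
    (hbad : Nat.card S < Nat.card ((Hgr G α p₀ q₀).induce (Sᶜ : Set _)).ConnectedComponent) :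
    α + 1 ≤
      Nat.card {C : ((Hgr G α p₀ q₀).induce (Sᶜ : Set _)).ConnectedComponent // HasV G α p₀ q₀ S C} := by
  classical
  have h1 := card_comp_le (G := G) (α := α) (p₀ := p₀) (q₀ := q₀) (S := S)
  by_cases hF0 : ∃ j : Fin α,
      (Sum.inr (Sum.inr j) : (V × Fin α) ⊕ ((V × Fin α) ⊕ Fin α)) ∈ (Sᶜ : Set _) ∧
      ∀ i : V, (Sum.inr (Sum.inl (i, j)) : (V × Fin α) ⊕ ((V × Fin α) ⊕ Fin α)) ∈ (Sᶜ : Set _) ∧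
        (Sum.inl (i, j) : (V × Fin α) ⊕ ((V × Fin α) ⊕ Fin α)) ∈ (Sᶜ : Set _)
  · exfalso
    obtain ⟨j₀, hw, hall⟩ := hF0
    have hV1 : Nat.card {C : ((Hgr G α p₀ q₀).induce (Sᶜ : Set _)).ConnectedComponent //
        HasV G α p₀ q₀ S C} ≤ 1 := by
      have : Nat.card {C : ((Hgr G α p₀ q₀).induce (Sᶜ : Set _)).ConnectedComponent //
          HasV G α p₀ q₀ S C} ≤ Nat.card Unit := by
        refine Nat.card_le_card_of_injective (fun _ => ()) ?_
        intro C C' _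
        exact Subtype.ext (vcomp_unique hconn hnt j₀ hw hall C.1 C'.1 C.2 C'.2)
      simpa using this
    rcases Set.eq_empty_or_nonempty (BlockedCols S) with hBe | ⟨j₁, hj₁⟩
    · rcases Set.eq_empty_or_nonempty (Lones S) with hLe | ⟨p₁, hp₁⟩
      · have hW0 : Nat.card (BlockedCols S) = 0 := by simp [hBe]
        have hL0 : Nat.card (Lones S) = 0 := by simp [hLe]
        omega
      · have hW0 : Nat.card (BlockedCols S) = 0 := by simp [hBe]
        have h2 := card_S_ge_lone hp₁
        omega
    · obtain ⟨x₀, y₀, hxy⟩ := hnt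
      have h2 := card_S_ge_blocked hj₁ hxy
      omega
  · have hnF0 : ∀ j : Fin α,
        (Sum.inr (Sum.inr j) : (V × Fin α) ⊕ ((V × Fin α) ⊕ Fin α)) ∉ S →
        ∃ i : V, (Sum.inr (Sum.inl (i, j)) : (V × Fin α) ⊕ ((V × Fin α) ⊕ Fin α)) ∈ S ∨
          (Sum.inl (i, j) : (V × Fin α) ⊕ ((V × Fin α) ⊕ Fin α)) ∈ S := by
      intro j hwj
      by_contra hcon
      push_neg at hcon
      exact hF0 ⟨j, hwj, fun i => ⟨(hcon i).1, (hcon i).2⟩⟩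
    have h2 := card_S_ge hnt hnF0
    omega

end Core3


section Wrappers

variable {V : Type*} [Fintype V] {G : SimpleGraph V} {α : ℕ}

/-- The chosen row of a v-component. -/
noncomputable def rho {p₀ q₀ : V × Fin α} {S : Set ((V × Fin α) ⊕ ((V × Fin α) ⊕ Fin α))}
    (C : {C : ((Hgr G α p₀ q₀).induce (Sᶜ : Set _)).ConnectedComponent // HasV G α p₀ q₀ S C}) : V :=
  C.2.choose.1

lemma rho_spec {p₀ q₀ : V × Fin α} {S : Set ((V × Fin α) ⊕ ((V × Fin α) ⊕ Fin α))}
    (C : {C : ((Hgr G α p₀ q₀).induce (Sᶜ : Set _)).ConnectedComponent // HasV G α p₀ q₀ S C}) :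
    cmk G α p₀ q₀ S (Sum.inl C.2.choose) C.2.choose_spec.choose = C.1 :=
  C.2.choose_spec.choose_spec

/-- If the chosen vertices of two v-components coincide, the components coincide. -/
lemma comp_eq_of_choose_eq {p₀ q₀ : V × Fin α} {S : Set ((V × Fin α) ⊕ ((V × Fin α) ⊕ Fin α))}
    {C C' : {C : ((Hgr G α p₀ q₀).induce (Sᶜ : Set _)).ConnectedComponent // HasV G α p₀ q₀ S C}}
    (h : C.2.choose = C'.2.choose) : C = C' := by
  have h1 := rho_spec C
  have h2 := rho_spec C'
  refine Subtype.ext ?_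
  rw [← h1, ← h2]
  congr 1
  rw [h]

/-- If the chosen vertices are joined by an edge of `Hgr`, the components coincide. -/
lemma comp_eq_of_adj {p₀ q₀ : V × Fin α} {S : Set ((V × Fin α) ⊕ ((V × Fin α) ⊕ Fin α))}
    {C C' : {C : ((Hgr G α p₀ q₀).induce (Sᶜ : Set _)).ConnectedComponent // HasV G α p₀ q₀ S C}}
    (h : (Hgr G α p₀ q₀).Adj (Sum.inl C.2.choose) (Sum.inl C'.2.choose)) : C = C' := by
  have h1 := rho_spec C
  have h2 := rho_spec C'
  refine Subtype.ext ?_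
  rw [← h1, ← h2]
  exact cmk_eq_of_adj _ _ h

/-- Wrapper for criticality: a bad cutset of `Galpha` minus a cross edge yields a large
independent set of `G` minus the corresponding edge. -/
lemma impB (hnt : Nontrivial V) (hconn : G.Connected) {a b : V} (hab : G.Adj a b) (j0 : Fin α)
    (S : Set ((V × Fin α) ⊕ ((V × Fin α) ⊕ Fin α)))
    (hcut : 1 < Nat.card ((Hgr G α (a, j0) (b, j0)).induce (Sᶜ : Set _)).ConnectedComponent)
    (hbad : Nat.card S < Nat.card ((Hgr G α (a, j0) (b, j0)).induce (Sᶜ : Set _)).ConnectedComponent) :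
    α + 1 ≤ _root_.indepNum (G.deleteEdges {s(a, b)}) := by
  classical
  have hcv := core hnt hconn hcut hbad
  have hinj : Function.Injective (rho (G := G) (α := α) (p₀ := (a, j0)) (q₀ := (b, j0)) (S := S)) := by
    intro C C' heq
    by_cases hpp : C.2.choose = C'.2.choose
    · exact comp_eq_of_choose_eq hpp
    · refine comp_eq_of_adj (hgr_adj_vv_of hpp (Or.inl heq) ?_)
      rintro (⟨he1, he2⟩ | ⟨he1, he2⟩)
      · have h1 : rho C = a := congrArg Prod.fst he1
        have h2 : rho C' = b := congrArg Prod.fst he2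
        exact hab.ne ((h1.symm.trans heq).trans h2)
      · have h1 : rho C = b := congrArg Prod.fst he1
        have h2 : rho C' = a := congrArg Prod.fst he2
        exact hab.ne ((h2.symm.trans heq.symm).trans h1)
  have hindep : (Set.range (rho (G := G) (α := α) (p₀ := (a, j0)) (q₀ := (b, j0)) (S := S))).Pairwise
      (fun x y => ¬ (G.deleteEdges {s(a, b)}).Adj x y) := by
    rintro x ⟨C, rfl⟩ y ⟨C', rfl⟩ hne hadj
    rw [deleteEdges_adj] at hadj
    obtain ⟨hGadj, hnd⟩ := hadj
    have : C = C' := by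
      refine comp_eq_of_adj (hgr_adj_vv_of ?_ (Or.inr hGadj) ?_)
      · intro hcon
        exact hne (congrArg Prod.fst hcon)
      · rintro (⟨he1, he2⟩ | ⟨he1, he2⟩)
        · refine hnd ?_
          have hx : rho C = a := congrArg Prod.fst he1
          have hy : rho C' = b := congrArg Prod.fst he2
          rw [hx, hy]
          exact Set.mem_singleton _
        · refine hnd ?_
          have hx : rho C = b := congrArg Prod.fst he1
          have hy : rho C' = a := congrArg Prod.fst he2
          rw [hx, hy]
          exact Set.mem_singleton_iff.mpr Sym2.eq_swap
    exact hne (congrArg rho this)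
  have hcard : Nat.card {C : ((Hgr G α (a, j0) (b, j0)).induce (Sᶜ : Set _)).ConnectedComponent //
      HasV G α (a, j0) (b, j0) S C} ≤ Nat.card (Set.range (rho (G := G) (α := α)
        (p₀ := (a, j0)) (q₀ := (b, j0)) (S := S))) := by
    refine Nat.card_le_card_of_injective (fun C => ⟨rho C, Set.mem_range_self C⟩) ?_
    intro C C' heq
    dsimp only at heq
    exact hinj (congrArg Subtype.val heq)
  have := le_indepNum (G := G.deleteEdges {s(a, b)}) hindep
  omega

/-- Wrapper for `α ≤ indepNum G`: a bad cutset of `Galpha` minus a clique edge. -/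
lemma impC (hnt : Nontrivial V) (hconn : G.Connected) {a : V} {j0 j1 : Fin α} (hj : j0 ≠ j1)
    (S : Set ((V × Fin α) ⊕ ((V × Fin α) ⊕ Fin α)))
    (hcut : 1 < Nat.card ((Hgr G α (a, j0) (a, j1)).induce (Sᶜ : Set _)).ConnectedComponent)
    (hbad : Nat.card S < Nat.card ((Hgr G α (a, j0) (a, j1)).induce (Sᶜ : Set _)).ConnectedComponent) :
    α ≤ _root_.indepNum G := by
  classical
  have hcv := core hnt hconn hcut hbad
  set p₀ : V × Fin α := (a, j0) with hp₀
  set q₀ : V × Fin α := (a, j1) with hq₀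
  -- collision analysis
  have collide : ∀ C C' : {C : ((Hgr G α p₀ q₀).induce (Sᶜ : Set _)).ConnectedComponent //
      HasV G α p₀ q₀ S C}, rho C = rho C' → C ≠ C' →
      (C.2.choose = p₀ ∧ C'.2.choose = q₀) ∨ (C.2.choose = q₀ ∧ C'.2.choose = p₀) := by
    intro C C' heq hne
    by_contra hnd
    by_cases hpp : C.2.choose = C'.2.choose
    · exact hne (comp_eq_of_choose_eq hpp)
    · exact hne (comp_eq_of_adj (hgr_adj_vv_of hpp (Or.inl heq) hnd))
  have hindep : (Set.range (rho (G := G) (α := α) (p₀ := p₀) (q₀ := q₀) (S := S))).Pairwise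
      (fun x y => ¬ G.Adj x y) := by
    rintro x ⟨C, rfl⟩ y ⟨C', rfl⟩ hne hadj
    have : C = C' := by
      refine comp_eq_of_adj (hgr_adj_vv_of ?_ (Or.inr hadj) ?_)
      · intro hcon
        exact hne (congrArg Prod.fst hcon)
      · rintro (⟨he1, he2⟩ | ⟨he1, he2⟩)
        · have h1 : rho C = a := congrArg Prod.fst he1
          have h2 : rho C' = a := congrArg Prod.fst he2
          exact hne (h1.trans h2.symm)
        · have h1 : rho C = a := congrArg Prod.fst he1
          have h2 : rho C' = a := congrArg Prod.fst he2
          exact hne (h1.trans h2.symm)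
    exact hne (congrArg rho this)
  have hle := le_indepNum (G := G) hindep
  by_cases hcol : ∃ C₀ C₁ : {C : ((Hgr G α p₀ q₀).induce (Sᶜ : Set _)).ConnectedComponent //
      HasV G α p₀ q₀ S C}, C₀ ≠ C₁ ∧ rho C₀ = rho C₁
  · obtain ⟨C₀, C₁, hne01, hr01⟩ := hcol
    have hcard : Nat.card {C : ((Hgr G α p₀ q₀).induce (Sᶜ : Set _)).ConnectedComponent //
        HasV G α p₀ q₀ S C} ≤ Nat.card (↥(Set.range (rho (G := G) (α := α) (p₀ := p₀) (q₀ := q₀)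
          (S := S))) ⊕ Unit) := by
      refine Nat.card_le_card_of_injective (fun C =>
        if C = C₀ then Sum.inr () else Sum.inl ⟨rho C, Set.mem_range_self C⟩) ?_
      intro C C' heq
      dsimp only at heq
      by_cases h1 : C = C₀ <;> by_cases h2 : C' = C₀
      · rw [h1, h2]
      · rw [if_pos h1, if_neg h2] at heq
        exact absurd heq (by simp)
      · rw [if_neg h1, if_pos h2] at heq
        exact absurd heq (by simp)
      · rw [if_neg h1, if_neg h2] at heq
        simp only [Sum.inl.injEq, Subtype.mk.injEq] at heq
        by_contra hne
        have hCC := collide C C' heq hne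
        have hC01 := collide C₀ C₁ hr01 hne01
        rcases hCC with ⟨ha1, ha2⟩ | ⟨ha1, ha2⟩ <;> rcases hC01 with ⟨hb1, _⟩ | ⟨hb1, _⟩
        · exact h1 (comp_eq_of_choose_eq (ha1.trans hb1.symm))
        · exact h2 (comp_eq_of_choose_eq (ha2.trans hb1.symm))
        · exact h2 (comp_eq_of_choose_eq (ha2.trans hb1.symm))
        · exact h1 (comp_eq_of_choose_eq (ha1.trans hb1.symm))
    rw [Nat.card_sum] at hcard
    simp only [Nat.card_unique] at hcard
    omega
  · push_neg at hcol
    have hcard : Nat.card {C : ((Hgr G α p₀ q₀).induce (Sᶜ : Set _)).ConnectedComponent //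
        HasV G α p₀ q₀ S C} ≤ Nat.card (Set.range (rho (G := G) (α := α) (p₀ := p₀) (q₀ := q₀)
          (S := S))) := by
      refine Nat.card_le_card_of_injective (fun C => ⟨rho C, Set.mem_range_self C⟩) ?_
      intro C C' heq
      dsimp only at heq
      simp only [Subtype.mk.injEq] at heq
      by_contra hne
      exact hne (hcol C C' hne heq |>.elim)
    omega

end Wrappers


end Stmt12Aux

open Stmt12Aux

theorem stmt12 {V : Type*} [Fintype V] (G : SimpleGraph V) (α : ℕ)
    (hconn : G.Connected) (hmin : MinTough 1 (Galpha G α)) :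
    AlphaCritical G ∧ _root_.indepNum G = α := by
  classical
  rcases Nat.eq_zero_or_pos α with hα0 | hα
  · subst hα0
    exact (alpha_zero_contra hmin).elim
  · have hne : Nonempty V := hconn.nonempty
    rcases subsingleton_or_nontrivial V with hsub | hnt
    · exact (subsingleton_contra hsub hne hα hmin.1.1).elim
    · have hT1 : IsTTough 1 (Galpha G α) := hmin.1.1
      have hub : _root_.indepNum G ≤ α := indepNum_le (fun s hs => card_indep_le hα hT1 s hs)
      have hlb : α ≤ _root_.indepNum G := by
        rcases Nat.lt_or_ge α 2 with h2 | h2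
        · have hα1 : α = 1 := by omega
          have h1 : Nat.card ↥({hne.some} : Set V) ≤ _root_.indepNum G :=
            le_indepNum (by simp)
          have : Nat.card ↥({hne.some} : Set V) = 1 := by
            simp [Nat.card_coe_set_eq, Set.ncard_singleton]
          omega
        · obtain ⟨a⟩ := hne
          have hj : (⟨0, by omega⟩ : Fin α) ≠ ⟨1, by omega⟩ := by
            simp [Fin.ext_iff]
          have hedge : s((Sum.inl (a, ⟨0, by omega⟩) : (V × Fin α) ⊕ ((V × Fin α) ⊕ Fin α)),
              Sum.inl (a, ⟨1, by omega⟩)) ∈ (Galpha G α).edgeSet := by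
            rw [SimpleGraph.mem_edgeSet]
            exact galpha_adj_vv.mpr ⟨fun hcon => hj (congrArg Prod.snd hcon), Or.inl rfl⟩
          have hnT := hmin.2 _ hedge
          unfold IsTTough at hnT
          push_neg at hnT
          obtain ⟨S, hScut, hSlt⟩ := hnT
          rw [one_mul, Nat.cast_lt] at hSlt
          exact impC hnt hconn hj S hScut hSlt
      have heq : _root_.indepNum G = α := le_antisymm hub hlb
      refine ⟨?_, heq⟩
      intro e he
      revert he
      refine Sym2.ind (fun a b => ?_) e
      intro he
      have hab : G.Adj a b := (G.mem_edgeSet).mp he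
      have hedge : s((Sum.inl (a, ⟨0, hα⟩) : (V × Fin α) ⊕ ((V × Fin α) ⊕ Fin α)),
          Sum.inl (b, ⟨0, hα⟩)) ∈ (Galpha G α).edgeSet := by
        rw [SimpleGraph.mem_edgeSet]
        exact galpha_adj_vv.mpr ⟨fun hcon => hab.ne (congrArg Prod.fst hcon), Or.inr hab⟩
      have hnT := hmin.2 _ hedge
      unfold IsTTough at hnT
      push_neg at hnT
      obtain ⟨S, hScut, hSlt⟩ := hnT
      rw [one_mul, Nat.cast_lt] at hSlt
      have himp := impB hnt hconn hab (⟨0, hα⟩ : Fin α) S hScut hSlt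
      rw [heq]
      omega
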